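/- Let P be a finite poset that is irreducible with respect to ordinal sum, and let k be a field. If there exists a compatible monomial order ⪯ on S = k[x_α : α ∈ L(P)] such that F_{L(P)} forms a Khovanskii basis of R(L(P)) with respect to ⪯, then P is (2+2)-free and (1+1+1)-free. -/

import Mathlib

open MvPolynomial

/-- The leading exponent (multidegree) of a multivariate polynomial with respect to a
monomial order. -/
noncomputable def MonomialOrder.degree' {σ : Type*} (m : MonomialOrder σ)
    {R : Type*} [CommSemiring R] (f : MvPolynomial σ R) : σ →₀ ℕ :=
  m.toSyn.symm (f.support.sup fun d => m.toSyn d)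

/-- The leading term `in_⪯(f)` of a multivariate polynomial with respect to a
monomial order. -/
noncomputable def MonomialOrder.leadingTerm' {σ : Type*} (m : MonomialOrder σ)
    {R : Type*} [CommSemiring R] (f : MvPolynomial σ R) : MvPolynomial σ R :=
  MvPolynomial.monomial (m.degree' f) (f.coeff (m.degree' f))

/-- `F` is a Khovanskii (SAGBI) basis of the subalgebra `R` with respect to the monomial
order `m`: the subalgebra generated by the leading terms of nonzero elements of `F` equals
the subalgebra generated by the leading terms of nonzero elements of `R`. -/
def IsKhovanskiiBasis {σ k : Type*} [Field k] (m : MonomialOrder σ)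
    (R : Subalgebra k (MvPolynomial σ k)) (F : Set (MvPolynomial σ k)) : Prop :=
  F ⊆ (R : Set (MvPolynomial σ k)) ∧
  Algebra.adjoin k (m.leadingTerm' '' {f ∈ F | f ≠ 0}) =
    Algebra.adjoin k (m.leadingTerm' '' {f ∈ (R : Set (MvPolynomial σ k)) | f ≠ 0})

/-- The binomial `f_{α,β} = x_α x_β - x_{α⊓β} x_{α⊔β}`. -/
noncomputable def hibiPoly (k : Type*) [Field k] {σ : Type*} [Lattice σ] (α β : σ) :
    MvPolynomial σ k :=
  X α * X β - X (α ⊓ β) * X (α ⊔ β)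

/-- The set `F_L = {f_{α,β} : α, β ∈ L incomparable}`. -/
def hibiSet (k : Type*) [Field k] (σ : Type*) [Lattice σ] : Set (MvPolynomial σ k) :=
  {g | ∃ α β : σ, ¬ α ≤ β ∧ ¬ β ≤ α ∧ g = hibiPoly k α β}

/-- A monomial order is compatible if the leading term of each `f_{α,β}` is `x_α x_β`. -/
def IsCompatible (k : Type*) [Field k] {σ : Type*} [Lattice σ] (m : MonomialOrder σ) : Prop :=
  ∀ α β : σ, ¬ α ≤ β → ¬ β ≤ α → m.leadingTerm' (hibiPoly k α β) = X α * X β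

/-- `P` is `(2+2)`-free. -/
def TwoTwoFree (P : Type*) [PartialOrder P] : Prop :=
  ¬ ∃ a b c d : P, a < b ∧ c < d ∧ a ≠ c ∧ a ≠ d ∧ b ≠ c ∧ b ≠ d ∧
    ¬ a ≤ c ∧ ¬ c ≤ a ∧ ¬ a ≤ d ∧ ¬ d ≤ a ∧ ¬ b ≤ c ∧ ¬ c ≤ b ∧ ¬ b ≤ d ∧ ¬ d ≤ b

/-- `P` is `(1+1+1)`-free: no antichain of three elements. -/
def OneOneOneFree (P : Type*) [PartialOrder P] : Prop :=
  ¬ ∃ a b c : P, a ≠ b ∧ a ≠ c ∧ b ≠ c ∧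
    ¬ a ≤ b ∧ ¬ b ≤ a ∧ ¬ a ≤ c ∧ ¬ c ≤ a ∧ ¬ b ≤ c ∧ ¬ c ≤ b

/-- `P` is irreducible with respect to ordinal sum. -/
def OrdinalSumIrreducible (P : Type*) [PartialOrder P] : Prop :=
  ¬ ∃ A B : Set P, A.Nonempty ∧ B.Nonempty ∧ Disjoint A B ∧ A ∪ B = Set.univ ∧
    ∀ a ∈ A, ∀ b ∈ B, a < b


namespace KhovAux

variable {σ : Type*}

/-- exponent vector of `x_α x_β` -/
noncomputable def pairv (α β : σ) : σ →₀ ℕ := Finsupp.single α 1 + Finsupp.single β 1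

/-- exponent vector of `x_α x_β x_γ x_δ` -/
noncomputable def quadv (α β γ δ : σ) : σ →₀ ℕ :=
  Finsupp.single α 1 + Finsupp.single β 1 + Finsupp.single γ 1 + Finsupp.single δ 1

lemma quadv_eq (α β γ δ : σ) : quadv α β γ δ = pairv α β + pairv γ δ := by
  simp only [quadv, pairv]; abel

lemma degree_single_one (a : σ) : Finsupp.degree (Finsupp.single a (1:ℕ)) = 1 := by
  classical
  simp [Finsupp.degree_single]

lemma degree_add' (u v : σ →₀ ℕ) :
    Finsupp.degree (u + v) = Finsupp.degree u + Finsupp.degree v := by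
  simp [Finsupp.degree_eq_weight_one, map_add]

lemma degree_pairv (α β : σ) : Finsupp.degree (pairv α β) = 2 := by
  simp [pairv, degree_add', degree_single_one]

lemma degree_quadv (α β γ δ : σ) : Finsupp.degree (quadv α β γ δ) = 4 := by
  simp [quadv_eq, degree_add', degree_pairv]

lemma quadv_apply [DecidableEq σ] (a₁ a₂ a₃ a₄ t : σ) :
    quadv a₁ a₂ a₃ a₄ t = (if a₁ = t then 1 else 0) + (if a₂ = t then 1 else 0)
      + (if a₃ = t then 1 else 0) + (if a₄ = t then 1 else 0) := by
  simp [quadv, Finsupp.add_apply, Finsupp.single_apply]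

lemma quadv_apply_ne_zero_iff (a₁ a₂ a₃ a₄ t : σ) :
    quadv a₁ a₂ a₃ a₄ t ≠ 0 ↔ (t = a₁ ∨ t = a₂ ∨ t = a₃ ∨ t = a₄) := by
  classical
  rw [quadv_apply]
  split_ifs with h1 h2 h3 h4 <;> simp_all [eq_comm]


lemma quadv_ne_zero_of_eq {a₁ a₂ a₃ a₄ t : σ} (h : t = a₁ ∨ t = a₂ ∨ t = a₃ ∨ t = a₄) :
    quadv a₁ a₂ a₃ a₄ t ≠ 0 := (quadv_apply_ne_zero_iff a₁ a₂ a₃ a₄ t).mpr h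

/-- the submonoid of exponents generated by incomparable pairs -/
noncomputable def pairW (σ : Type*) [Lattice σ] : AddSubmonoid (σ →₀ ℕ) :=
  AddSubmonoid.closure {u | ∃ α β : σ, ¬ α ≤ β ∧ ¬ β ≤ α ∧ u = pairv α β}

lemma mem_pairW_four [Lattice σ] {v : σ →₀ ℕ} (hv : v ∈ pairW σ)
    (h4 : Finsupp.degree v = 4) :
    ∃ α β γ δ : σ, ¬ α ≤ β ∧ ¬ β ≤ α ∧ ¬ γ ≤ δ ∧ ¬ δ ≤ γ ∧ v = quadv α β γ δ := by
  have key : v = 0 ∨ (∃ α β : σ, ¬ α ≤ β ∧ ¬ β ≤ α ∧ v = pairv α β) ∨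
      (∃ α β γ δ : σ, ¬ α ≤ β ∧ ¬ β ≤ α ∧ ¬ γ ≤ δ ∧ ¬ δ ≤ γ ∧ v = quadv α β γ δ) ∨
      6 ≤ Finsupp.degree v := by
    clear h4
    induction hv using AddSubmonoid.closure_induction with
    | mem u hu =>
      right; left; obtain ⟨α, β, h1, h2, rfl⟩ := hu; exact ⟨α, β, h1, h2, rfl⟩
    | zero => left; rfl
    | add x y hx hy ihx ihy =>
      rcases ihx with rfl | ⟨α, β, h1, h2, rfl⟩ | ⟨α, β, γ, δ, h1, h2, h3, h4, rfl⟩ | h6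
      · simpa using ihy
      · rcases ihy with rfl | ⟨γ, δ, h3, h4, rfl⟩ | ⟨_, _, _, _, _, _, _, _, rfl⟩ | h6'
        · right; left; exact ⟨α, β, h1, h2, by simp⟩
        · right; right; left; exact ⟨α, β, γ, δ, h1, h2, h3, h4, (quadv_eq α β γ δ).symm⟩
        · right; right; right
          rw [degree_add', degree_pairv, degree_quadv]
        · right; right; right
          rw [degree_add', degree_pairv]; omega
      · rcases ihy with rfl | ⟨_, _, _, _, rfl⟩ | ⟨_, _, _, _, _, _, _, _, rfl⟩ | h6'
        · right; right; left; exact ⟨α, β, γ, δ, h1, h2, h3, h4, by simp⟩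
        · right; right; right
          rw [degree_add', degree_quadv, degree_pairv]
        · right; right; right
          rw [degree_add', degree_quadv, degree_quadv]; omega
        · right; right; right
          rw [degree_add', degree_quadv]; omega
      · right; right; right
        rw [degree_add']; omega
  rcases key with rfl | ⟨α, β, _, _, rfl⟩ | h | h6
  · simp [map_zero] at h4
  · rw [degree_pairv] at h4; omega
  · exact h
  · omega

lemma no_bot_matching {τ : Type*} [PartialOrder τ] {s₁ s₂ s₃ s₄ z : τ}
    (hz : z = s₁ ∨ z = s₂ ∨ z = s₃ ∨ z = s₄)
    (h1 : z ≤ s₁) (h2 : z ≤ s₂) (h3 : z ≤ s₃) (h4 : z ≤ s₄)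
    {α β γ δ : τ} (hab : ¬ α ≤ β) (hba : ¬ β ≤ α) (hcd : ¬ γ ≤ δ) (hdc : ¬ δ ≤ γ)
    (heq : quadv s₁ s₂ s₃ s₄ = quadv α β γ δ) : False := by
  have hle : ∀ t : τ, (t = α ∨ t = β ∨ t = γ ∨ t = δ) → z ≤ t := by
    intro t ht
    have h0 : quadv s₁ s₂ s₃ s₄ t ≠ 0 := by rw [heq]; exact quadv_ne_zero_of_eq ht
    rcases (quadv_apply_ne_zero_iff _ _ _ _ _).mp h0 with rfl | rfl | rfl | rfl <;> assumption
  have hzm : z = α ∨ z = β ∨ z = γ ∨ z = δ := by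
    have h0 : quadv α β γ δ z ≠ 0 := by rw [← heq]; exact quadv_ne_zero_of_eq hz
    exact (quadv_apply_ne_zero_iff _ _ _ _ _).mp h0
  rcases hzm with rfl | rfl | rfl | rfl
  · exact hab (hle β (Or.inr (Or.inl rfl)))
  · exact hba (hle α (Or.inl rfl))
  · exact hcd (hle δ (Or.inr (Or.inr (Or.inr rfl))))
  · exact hdc (hle γ (Or.inr (Or.inr (Or.inl rfl))))

lemma no_top_matching {τ : Type*} [PartialOrder τ] {s₁ s₂ s₃ s₄ z : τ}
    (hz : z = s₁ ∨ z = s₂ ∨ z = s₃ ∨ z = s₄)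
    (h1 : s₁ ≤ z) (h2 : s₂ ≤ z) (h3 : s₃ ≤ z) (h4 : s₄ ≤ z)
    {α β γ δ : τ} (hab : ¬ α ≤ β) (hba : ¬ β ≤ α) (hcd : ¬ γ ≤ δ) (hdc : ¬ δ ≤ γ)
    (heq : quadv s₁ s₂ s₃ s₄ = quadv α β γ δ) : False := by
  have hle : ∀ t : τ, (t = α ∨ t = β ∨ t = γ ∨ t = δ) → t ≤ z := by
    intro t ht
    have h0 : quadv s₁ s₂ s₃ s₄ t ≠ 0 := by rw [heq]; exact quadv_ne_zero_of_eq ht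
    rcases (quadv_apply_ne_zero_iff _ _ _ _ _).mp h0 with rfl | rfl | rfl | rfl <;> assumption
  have hzm : z = α ∨ z = β ∨ z = γ ∨ z = δ := by
    have h0 : quadv α β γ δ z ≠ 0 := by rw [← heq]; exact quadv_ne_zero_of_eq hz
    exact (quadv_apply_ne_zero_iff _ _ _ _ _).mp h0
  rcases hzm with rfl | rfl | rfl | rfl
  · exact hba (hle β (Or.inr (Or.inl rfl)))
  · exact hab (hle α (Or.inl rfl))
  · exact hdc (hle δ (Or.inr (Or.inr (Or.inr rfl))))
  · exact hcd (hle γ (Or.inr (Or.inr (Or.inl rfl))))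

lemma quadv_not_mem_pairW_bot [Lattice σ] {s₁ s₂ s₃ s₄ z : σ}
    (hz : z = s₁ ∨ z = s₂ ∨ z = s₃ ∨ z = s₄)
    (h1 : z ≤ s₁) (h2 : z ≤ s₂) (h3 : z ≤ s₃) (h4 : z ≤ s₄) :
    quadv s₁ s₂ s₃ s₄ ∉ pairW σ := by
  intro hmem
  obtain ⟨α, β, γ, δ, hab, hba, hcd, hdc, heq⟩ := mem_pairW_four hmem (degree_quadv _ _ _ _)
  exact no_bot_matching hz h1 h2 h3 h4 hab hba hcd hdc heq

lemma quadv_not_mem_pairW_top [Lattice σ] {s₁ s₂ s₃ s₄ z : σ}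
    (hz : z = s₁ ∨ z = s₂ ∨ z = s₃ ∨ z = s₄)
    (h1 : s₁ ≤ z) (h2 : s₂ ≤ z) (h3 : s₃ ≤ z) (h4 : s₄ ≤ z) :
    quadv s₁ s₂ s₃ s₄ ∉ pairW σ := by
  intro hmem
  obtain ⟨α, β, γ, δ, hab, hba, hcd, hdc, heq⟩ := mem_pairW_four hmem (degree_quadv _ _ _ _)
  exact no_top_matching hz h1 h2 h3 h4 hab hba hcd hdc heq

end KhovAux
namespace KhovAux

open MvPolynomial

lemma degree_mem_support {σ : Type*} (m : MonomialOrder σ) {R : Type*} [CommSemiring R]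
    {g : MvPolynomial σ R} (hg : g ≠ 0) : m.degree' g ∈ g.support := by
  obtain ⟨d, hd, hsup⟩ := Finset.exists_mem_eq_sup g.support
    (MvPolynomial.support_nonempty.mpr hg) (fun d => m.toSyn d)
  rw [MonomialOrder.degree', hsup]
  simpa using hd

lemma coeff_eq_zero_of_adjoin_monomials {σ k : Type*} [Field k]
    {W : AddSubmonoid (σ →₀ ℕ)} {S : Set (MvPolynomial σ k)}
    (hS : ∀ p ∈ S, ∃ u ∈ W, ∃ c : k, p = MvPolynomial.monomial u c)
    {v : σ →₀ ℕ} (hv : v ∉ W) {x : MvPolynomial σ k}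
    (hx : x ∈ Algebra.adjoin k S) : MvPolynomial.coeff v x = 0 := by
  classical
  have hx' : x ∈ Submodule.span k ((Submonoid.closure S : Submonoid (MvPolynomial σ k)) :
      Set (MvPolynomial σ k)) := by
    rw [← Algebra.adjoin_eq_span]; exact hx
  clear hx
  induction hx' using Submodule.span_induction with
  | mem p hp =>
    have hp' : ∃ u ∈ W, ∃ c : k, p = MvPolynomial.monomial u c := by
      induction hp using Submonoid.closure_induction with
      | mem q hq => exact hS q hq
      | one => exact ⟨0, W.zero_mem, 1, by simp⟩
      | mul q r _ _ ihq ihr =>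
        obtain ⟨u, hu, c, rfl⟩ := ihq
        obtain ⟨u', hu', c', rfl⟩ := ihr
        exact ⟨u + u', W.add_mem hu hu', c * c', by rw [MvPolynomial.monomial_mul]⟩
    obtain ⟨u, hu, c, rfl⟩ := hp'
    rw [MvPolynomial.coeff_monomial, if_neg]
    rintro rfl; exact hv hu
  | zero => simp
  | add x y _ _ ihx ihy => simp [MvPolynomial.coeff_add, ihx, ihy]
  | smul a x _ ihx => simp [MvPolynomial.coeff_smul, ihx]

lemma X_mul_X {σ k : Type*} [Field k] (α β : σ) :
    (X α * X β : MvPolynomial σ k) = monomial (pairv α β) 1 := by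
  rw [show (X α : MvPolynomial σ k) = monomial (Finsupp.single α 1) 1 from rfl,
    show (X β : MvPolynomial σ k) = monomial (Finsupp.single β 1) 1 from rfl,
    MvPolynomial.monomial_mul, one_mul, pairv]

lemma khovanskii_contra {σ k : Type*} [Lattice σ] [Field k]
    {m : MonomialOrder σ} (hc : IsCompatible k m)
    (hkb : IsKhovanskiiBasis m (Algebra.adjoin k (hibiSet k σ)) (hibiSet k σ))
    {g : MvPolynomial σ k} (hg : g ∈ Algebra.adjoin k (hibiSet k σ)) (hg0 : g ≠ 0)
    (hbad : ∀ v ∈ g.support, v ∉ pairW σ) : False := by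
  classical
  have hvs := degree_mem_support m hg0
  have hco : MvPolynomial.coeff (m.degree' g) g ≠ 0 := MvPolynomial.mem_support_iff.mp hvs
  have hmem : m.leadingTerm' g ∈ Algebra.adjoin k
      (m.leadingTerm' '' {f ∈ (↑(Algebra.adjoin k (hibiSet k σ)) : Set (MvPolynomial σ k)) |
        f ≠ 0}) :=
    Algebra.subset_adjoin (Set.mem_image_of_mem _ ⟨hg, hg0⟩)
  rw [← hkb.2] at hmem
  have h0 : MvPolynomial.coeff (m.degree' g) (m.leadingTerm' g) = 0 := by
    refine coeff_eq_zero_of_adjoin_monomials ?_ (hbad _ hvs) hmem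
    rintro p ⟨f, ⟨⟨α, β, h1, h2, rfl⟩, -⟩, rfl⟩
    refine ⟨pairv α β, AddSubmonoid.subset_closure ⟨α, β, h1, h2, rfl⟩, 1, ?_⟩
    rw [hc α β h1 h2, X_mul_X]
  rw [MonomialOrder.leadingTerm', MvPolynomial.coeff_monomial, if_pos rfl] at h0
  exact hco h0

end KhovAux
namespace KhovAux

open MvPolynomial

lemma monomial_one_mul {σ k : Type*} [Field k] (u v : σ →₀ ℕ) :
    (monomial u (1:k)) * monomial v 1 = monomial (u + v) 1 := by
  rw [MvPolynomial.monomial_mul, one_mul]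

lemma hibi_mul_expand {σ k : Type*} [Lattice σ] [Field k] (α β γ δ : σ) :
    hibiPoly k α β * hibiPoly k γ δ =
      monomial (quadv α β γ δ) 1
        - monomial (quadv α β (γ ⊓ δ) (γ ⊔ δ)) 1
        - monomial (quadv (α ⊓ β) (α ⊔ β) γ δ) 1
        + monomial (quadv (α ⊓ β) (α ⊔ β) (γ ⊓ δ) (γ ⊔ δ)) 1 := by
  rw [hibiPoly, hibiPoly, X_mul_X, X_mul_X, X_mul_X, X_mul_X,
    sub_mul, mul_sub, mul_sub, monomial_one_mul, monomial_one_mul, monomial_one_mul,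
    monomial_one_mul, ← quadv_eq, ← quadv_eq, ← quadv_eq, ← quadv_eq]
  ring

lemma witness_contra {σ k : Type*} [Lattice σ] [Field k]
    {m : MonomialOrder σ} (hc : IsCompatible k m)
    (hkb : IsKhovanskiiBasis m (Algebra.adjoin k (hibiSet k σ)) (hibiSet k σ))
    {α β γ δ α' β' γ' δ' : σ}
    (hab : ¬ α ≤ β) (hba : ¬ β ≤ α) (hcd : ¬ γ ≤ δ) (hdc : ¬ δ ≤ γ)
    (hab' : ¬ α' ≤ β') (hba' : ¬ β' ≤ α') (hcd' : ¬ γ' ≤ δ') (hdc' : ¬ δ' ≤ γ')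
    (hquad : quadv α β γ δ = quadv α' β' γ' δ')
    (w : σ →₀ ℕ)
    (hcoeff : MvPolynomial.coeff w
        (-(monomial (quadv α β (γ ⊓ δ) (γ ⊔ δ)) (1:k))
          - monomial (quadv (α ⊓ β) (α ⊔ β) γ δ) 1
          + monomial (quadv (α ⊓ β) (α ⊔ β) (γ ⊓ δ) (γ ⊔ δ)) 1
          + monomial (quadv α' β' (γ' ⊓ δ') (γ' ⊔ δ')) 1
          + monomial (quadv (α' ⊓ β') (α' ⊔ β') γ' δ') 1
          - monomial (quadv (α' ⊓ β') (α' ⊔ β') (γ' ⊓ δ') (γ' ⊔ δ')) 1) ≠ 0)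
    (hb1 : quadv α β (γ ⊓ δ) (γ ⊔ δ) ∉ pairW σ)
    (hb2 : quadv (α ⊓ β) (α ⊔ β) γ δ ∉ pairW σ)
    (hb3 : quadv (α ⊓ β) (α ⊔ β) (γ ⊓ δ) (γ ⊔ δ) ∉ pairW σ)
    (hb4 : quadv α' β' (γ' ⊓ δ') (γ' ⊔ δ') ∉ pairW σ)
    (hb5 : quadv (α' ⊓ β') (α' ⊔ β') γ' δ' ∉ pairW σ)
    (hb6 : quadv (α' ⊓ β') (α' ⊔ β') (γ' ⊓ δ') (γ' ⊔ δ') ∉ pairW σ) : False := by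
  classical
  set v1 := quadv α β (γ ⊓ δ) (γ ⊔ δ) with hv1
  set v2 := quadv (α ⊓ β) (α ⊔ β) γ δ with hv2
  set v3 := quadv (α ⊓ β) (α ⊔ β) (γ ⊓ δ) (γ ⊔ δ) with hv3
  set v4 := quadv α' β' (γ' ⊓ δ') (γ' ⊔ δ') with hv4
  set v5 := quadv (α' ⊓ β') (α' ⊔ β') γ' δ' with hv5
  set v6 := quadv (α' ⊓ β') (α' ⊔ β') (γ' ⊓ δ') (γ' ⊔ δ') with hv6
  set g := hibiPoly k α β * hibiPoly k γ δ - hibiPoly k α' β' * hibiPoly k γ' δ' with hgdef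
  have hgR : g ∈ Algebra.adjoin k (hibiSet k σ) := by
    apply Subalgebra.sub_mem
    · exact Subalgebra.mul_mem _ (Algebra.subset_adjoin ⟨α, β, hab, hba, rfl⟩)
        (Algebra.subset_adjoin ⟨γ, δ, hcd, hdc, rfl⟩)
    · exact Subalgebra.mul_mem _ (Algebra.subset_adjoin ⟨α', β', hab', hba', rfl⟩)
        (Algebra.subset_adjoin ⟨γ', δ', hcd', hdc', rfl⟩)
  have hgeq : g = -(monomial v1 (1:k)) - monomial v2 1 + monomial v3 1
      + monomial v4 1 + monomial v5 1 - monomial v6 1 := by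
    rw [hgdef, hibi_mul_expand, hibi_mul_expand, hquad]
    ring
  have hcw : MvPolynomial.coeff w g ≠ 0 := by
    rw [hgeq]; exact hcoeff
  have hg0 : g ≠ 0 := by
    intro h0
    rw [h0] at hcw
    simp at hcw
  refine khovanskii_contra hc hkb hgR hg0 ?_
  intro v hv
  have hvmem : v = v1 ∨ v = v2 ∨ v = v3 ∨ v = v4 ∨ v = v5 ∨ v = v6 := by
    by_contra hcon
    push_neg at hcon
    obtain ⟨h1, h2, h3, h4, h5, h6⟩ := hcon
    rw [MvPolynomial.mem_support_iff, hgeq] at hv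
    simp [MvPolynomial.coeff_monomial, Ne.symm h1, Ne.symm h2, Ne.symm h3, Ne.symm h4,
      Ne.symm h5, Ne.symm h6] at hv
  rcases hvmem with rfl | rfl | rfl | rfl | rfl | rfl <;> assumption

end KhovAux
namespace KhovAux

open MvPolynomial

lemma case_twotwo {σ k : Type*} [Lattice σ] [Field k]
    {m : MonomialOrder σ} (hc : IsCompatible k m)
    (hkb : IsKhovanskiiBasis m (Algebra.adjoin k (hibiSet k σ)) (hibiSet k σ))
    {A' C' B D Z : σ}
    (hm1 : A' ⊓ C' = Z) (hm2 : A' ⊓ D = Z) (hm3 : B ⊓ C' = Z) (hm4 : B ⊓ D = Z)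
    (nAC : ¬ A' ≤ C') (nCA : ¬ C' ≤ A') (nBD : ¬ B ≤ D) (nDB : ¬ D ≤ B)
    (nAD : ¬ A' ≤ D) (nDA : ¬ D ≤ A') (nBC : ¬ B ≤ C') (nCB : ¬ C' ≤ B)
    (neADAC : A' ⊔ D ≠ A' ⊔ C') (neBCAC : B ⊔ C' ≠ A' ⊔ C') (neBDAC : B ⊔ D ≠ A' ⊔ C') :
    False := by
  classical
  have zA : Z ≤ A' := hm1 ▸ inf_le_left
  have zC : Z ≤ C' := hm1 ▸ inf_le_right
  have zB : Z ≤ B := hm4 ▸ inf_le_left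
  have zD : Z ≤ D := hm4 ▸ inf_le_right
  have neAZ : A' ≠ Z := fun h => nAC (h.le.trans zC)
  have neCZ : C' ≠ Z := fun h => nCA (h.le.trans zA)
  have neBZ : B ≠ Z := fun h => nBD (h.le.trans zD)
  have neDZ : D ≠ Z := fun h => nDB (h.le.trans zB)
  have neACZ : A' ⊔ C' ≠ Z := fun h => nAC ((le_sup_left.trans h.le).trans zC)
  have neBDZ : B ⊔ D ≠ Z := fun h => nBD ((le_sup_left.trans h.le).trans zD)
  have neADZ : A' ⊔ D ≠ Z := fun h => nAD ((le_sup_left.trans h.le).trans zD)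
  have neBCZ : B ⊔ C' ≠ Z := fun h => nBC ((le_sup_left.trans h.le).trans zC)
  set w : σ →₀ ℕ := quadv Z (A' ⊔ C') Z (B ⊔ D) with hw
  have n1 : quadv A' C' Z (B ⊔ D) ≠ w := by
    intro h
    have h' := DFunLike.congr_fun h Z
    simp [hw, quadv_apply, neAZ, neCZ, neBDZ, neACZ] at h'
  have n2 : quadv Z (A' ⊔ C') B D ≠ w := by
    intro h
    have h' := DFunLike.congr_fun h Z
    simp [hw, quadv_apply, neBZ, neDZ, neACZ, neBDZ] at h'
  have n4 : quadv A' D Z (B ⊔ C') ≠ w := by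
    intro h
    have h' := DFunLike.congr_fun h Z
    simp [hw, quadv_apply, neAZ, neDZ, neBCZ, neACZ, neBDZ] at h'
  have n5 : quadv Z (A' ⊔ D) B C' ≠ w := by
    intro h
    have h' := DFunLike.congr_fun h Z
    simp [hw, quadv_apply, neADZ, neBZ, neCZ, neACZ, neBDZ] at h'
  have n6 : quadv Z (A' ⊔ D) Z (B ⊔ C') ≠ w := by
    intro h
    have h' := DFunLike.congr_fun h (A' ⊔ C')
    simp [hw, quadv_apply, Ne.symm neACZ, neADAC, neBCAC, neBDAC] at h'
  have hquad : quadv A' C' B D = quadv A' D B C' := by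
    simp only [quadv]; abel
  have hcoeff : MvPolynomial.coeff w
      (-(monomial (quadv A' C' (B ⊓ D) (B ⊔ D)) (1:k))
        - monomial (quadv (A' ⊓ C') (A' ⊔ C') B D) 1
        + monomial (quadv (A' ⊓ C') (A' ⊔ C') (B ⊓ D) (B ⊔ D)) 1
        + monomial (quadv A' D (B ⊓ C') (B ⊔ C')) 1
        + monomial (quadv (A' ⊓ D) (A' ⊔ D) B C') 1
        - monomial (quadv (A' ⊓ D) (A' ⊔ D) (B ⊓ C') (B ⊔ C')) 1) ≠ 0 := by
    rw [hm1, hm2, hm3, hm4]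
    simp only [MvPolynomial.coeff_sub, MvPolynomial.coeff_add, MvPolynomial.coeff_neg,
      MvPolynomial.coeff_monomial, if_neg n1, if_neg n2, if_neg n4, if_neg n5, if_neg n6,
      if_pos rfl]
    norm_num [hw]
  have hb1 : quadv A' C' (B ⊓ D) (B ⊔ D) ∉ pairW σ := by
    rw [hm4]
    exact quadv_not_mem_pairW_bot (Or.inr (Or.inr (Or.inl rfl))) zA zC le_rfl
      (zB.trans le_sup_left)
  have hb2 : quadv (A' ⊓ C') (A' ⊔ C') B D ∉ pairW σ := by
    rw [hm1]
    exact quadv_not_mem_pairW_bot (Or.inl rfl) le_rfl (zA.trans le_sup_left) zB zD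
  have hb3 : quadv (A' ⊓ C') (A' ⊔ C') (B ⊓ D) (B ⊔ D) ∉ pairW σ := by
    rw [hm1, hm4]
    exact quadv_not_mem_pairW_bot (Or.inl rfl) le_rfl (zA.trans le_sup_left) le_rfl
      (zB.trans le_sup_left)
  have hb4 : quadv A' D (B ⊓ C') (B ⊔ C') ∉ pairW σ := by
    rw [hm3]
    exact quadv_not_mem_pairW_bot (Or.inr (Or.inr (Or.inl rfl))) zA zD le_rfl
      (zB.trans le_sup_left)
  have hb5 : quadv (A' ⊓ D) (A' ⊔ D) B C' ∉ pairW σ := by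
    rw [hm2]
    exact quadv_not_mem_pairW_bot (Or.inl rfl) le_rfl (zA.trans le_sup_left) zB zC
  have hb6 : quadv (A' ⊓ D) (A' ⊔ D) (B ⊓ C') (B ⊔ C') ∉ pairW σ := by
    rw [hm2, hm3]
    exact quadv_not_mem_pairW_bot (Or.inl rfl) le_rfl (zA.trans le_sup_left) le_rfl
      (zB.trans le_sup_left)
  exact witness_contra hc hkb nAC nCA nBD nDB nAD nDA nBC nCB hquad w hcoeff
    hb1 hb2 hb3 hb4 hb5 hb6

end KhovAux
namespace KhovAux

open MvPolynomial

lemma case_oneoneone {σ k : Type*} [Lattice σ] [Field k]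
    {m : MonomialOrder σ} (hc : IsCompatible k m)
    (hkb : IsKhovanskiiBasis m (Algebra.adjoin k (hibiSet k σ)) (hibiSet k σ))
    {A' B' C' Z : σ}
    (hm1 : A' ⊓ B' = Z) (hm2 : (A' ⊔ C') ⊓ (B' ⊔ C') = C')
    (hm3 : A' ⊓ (B' ⊔ C') = Z) (hm4 : B' ⊓ (A' ⊔ C') = Z)
    (nAB : ¬ A' ≤ B') (nBA : ¬ B' ≤ A')
    (nUU : ¬ A' ⊔ C' ≤ B' ⊔ C') (nUU' : ¬ B' ⊔ C' ≤ A' ⊔ C')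
    (nAU : ¬ A' ≤ B' ⊔ C') (nUA : ¬ B' ⊔ C' ≤ A')
    (nBU : ¬ B' ≤ A' ⊔ C') (nUB : ¬ A' ⊔ C' ≤ B')
    (neCZ : C' ≠ Z) : False := by
  classical
  have zA : Z ≤ A' := hm1 ▸ inf_le_left
  have zB : Z ≤ B' := hm1 ▸ inf_le_right
  have zUBC : Z ≤ B' ⊔ C' := hm3 ▸ inf_le_right
  have zUAC : Z ≤ A' ⊔ C' := hm4 ▸ inf_le_right
  have zC : Z ≤ C' := hm2 ▸ le_inf zUAC zUBC
  have neAZ : A' ≠ Z := fun h => nAB (h.le.trans zB)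
  have neBZ : B' ≠ Z := fun h => nBA (h.le.trans zA)
  have neABZ : A' ⊔ B' ≠ Z := fun h => nAB ((le_sup_left.trans h.le).trans zB)
  have neUACZ : A' ⊔ C' ≠ Z := fun h => nAU ((le_sup_left.trans h.le).trans zUBC)
  have neUBCZ : B' ⊔ C' ≠ Z := fun h => nBU ((le_sup_left.trans h.le).trans zUAC)
  have neUUZ : (A' ⊔ C') ⊔ (B' ⊔ C') ≠ Z := fun h =>
    nAU (((le_sup_left.trans le_sup_left).trans h.le).trans zUBC)
  have neAUZ : A' ⊔ (B' ⊔ C') ≠ Z := fun h => nAU ((le_sup_left.trans h.le).trans zUBC)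
  have neBUZ : B' ⊔ (A' ⊔ C') ≠ Z := fun h => nBU ((le_sup_left.trans h.le).trans zUAC)
  set w : σ →₀ ℕ := quadv A' B' C' ((A' ⊔ C') ⊔ (B' ⊔ C')) with hw
  have n2 : quadv Z (A' ⊔ B') (A' ⊔ C') (B' ⊔ C') ≠ w := by
    intro h
    have h' := DFunLike.congr_fun h Z
    simp [hw, quadv_apply, neAZ, neBZ, neCZ, neABZ, neUACZ, neUBCZ, neUUZ] at h'
  have n3 : quadv Z (A' ⊔ B') C' ((A' ⊔ C') ⊔ (B' ⊔ C')) ≠ w := by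
    intro h
    have h' := DFunLike.congr_fun h Z
    simp [hw, quadv_apply, neAZ, neBZ, neCZ, neABZ, neUUZ] at h'
  have n4 : quadv A' (B' ⊔ C') Z (B' ⊔ (A' ⊔ C')) ≠ w := by
    intro h
    have h' := DFunLike.congr_fun h Z
    simp [hw, quadv_apply, neAZ, neBZ, neCZ, neUBCZ, neBUZ, neUUZ] at h'
  have n5 : quadv Z (A' ⊔ (B' ⊔ C')) B' (A' ⊔ C') ≠ w := by
    intro h
    have h' := DFunLike.congr_fun h Z
    simp [hw, quadv_apply, neAZ, neBZ, neCZ, neAUZ, neUACZ, neUUZ] at h'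
  have n6 : quadv Z (A' ⊔ (B' ⊔ C')) Z (B' ⊔ (A' ⊔ C')) ≠ w := by
    intro h
    have h' := DFunLike.congr_fun h Z
    simp [hw, quadv_apply, neAZ, neBZ, neCZ, neAUZ, neBUZ, neUUZ] at h'
  have hquad : quadv A' B' (A' ⊔ C') (B' ⊔ C') = quadv A' (B' ⊔ C') B' (A' ⊔ C') := by
    simp only [quadv]; abel
  have hcoeff : MvPolynomial.coeff w
      (-(monomial (quadv A' B' ((A' ⊔ C') ⊓ (B' ⊔ C')) ((A' ⊔ C') ⊔ (B' ⊔ C'))) (1:k))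
        - monomial (quadv (A' ⊓ B') (A' ⊔ B') (A' ⊔ C') (B' ⊔ C')) 1
        + monomial (quadv (A' ⊓ B') (A' ⊔ B') ((A' ⊔ C') ⊓ (B' ⊔ C')) ((A' ⊔ C') ⊔ (B' ⊔ C'))) 1
        + monomial (quadv A' (B' ⊔ C') (B' ⊓ (A' ⊔ C')) (B' ⊔ (A' ⊔ C'))) 1
        + monomial (quadv (A' ⊓ (B' ⊔ C')) (A' ⊔ (B' ⊔ C')) B' (A' ⊔ C')) 1
        - monomial (quadv (A' ⊓ (B' ⊔ C')) (A' ⊔ (B' ⊔ C')) (B' ⊓ (A' ⊔ C')) (B' ⊔ (A' ⊔ C'))) 1)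
      ≠ 0 := by
    rw [hm1, hm2, hm3, hm4]
    simp only [MvPolynomial.coeff_sub, MvPolynomial.coeff_add, MvPolynomial.coeff_neg,
      MvPolynomial.coeff_monomial, if_neg n2, if_neg n3, if_neg n4, if_neg n5, if_neg n6,
      if_pos rfl]
    norm_num [hw]
  have hb1 : quadv A' B' ((A' ⊔ C') ⊓ (B' ⊔ C')) ((A' ⊔ C') ⊔ (B' ⊔ C')) ∉ pairW σ := by
    rw [hm2]
    exact quadv_not_mem_pairW_top (Or.inr (Or.inr (Or.inr rfl)))
      (le_sup_left.trans le_sup_left) (le_sup_left.trans le_sup_right)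
      (le_sup_right.trans le_sup_left) le_rfl
  have hb2 : quadv (A' ⊓ B') (A' ⊔ B') (A' ⊔ C') (B' ⊔ C') ∉ pairW σ := by
    rw [hm1]
    exact quadv_not_mem_pairW_bot (Or.inl rfl) le_rfl (zA.trans le_sup_left) zUAC zUBC
  have hb3 : quadv (A' ⊓ B') (A' ⊔ B') ((A' ⊔ C') ⊓ (B' ⊔ C')) ((A' ⊔ C') ⊔ (B' ⊔ C'))
      ∉ pairW σ := by
    rw [hm1, hm2]
    exact quadv_not_mem_pairW_bot (Or.inl rfl) le_rfl (zA.trans le_sup_left) zC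
      (zUAC.trans le_sup_left)
  have hb4 : quadv A' (B' ⊔ C') (B' ⊓ (A' ⊔ C')) (B' ⊔ (A' ⊔ C')) ∉ pairW σ := by
    rw [hm4]
    exact quadv_not_mem_pairW_bot (Or.inr (Or.inr (Or.inl rfl))) zA zUBC le_rfl
      (zB.trans le_sup_left)
  have hb5 : quadv (A' ⊓ (B' ⊔ C')) (A' ⊔ (B' ⊔ C')) B' (A' ⊔ C') ∉ pairW σ := by
    rw [hm3]
    exact quadv_not_mem_pairW_bot (Or.inl rfl) le_rfl (zA.trans le_sup_left) zB zUAC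
  have hb6 : quadv (A' ⊓ (B' ⊔ C')) (A' ⊔ (B' ⊔ C')) (B' ⊓ (A' ⊔ C')) (B' ⊔ (A' ⊔ C'))
      ∉ pairW σ := by
    rw [hm3, hm4]
    exact quadv_not_mem_pairW_bot (Or.inl rfl) le_rfl (zA.trans le_sup_left) le_rfl
      (zB.trans le_sup_left)
  exact witness_contra hc hkb nAB nBA nUU nUU' nAU nUA nBU nUB hquad w hcoeff
    hb1 hb2 hb3 hb4 hb5 hb6

end KhovAux
namespace KhovAux

lemma not_le_of_mem {P : Type*} [Preorder P] {s t : LowerSet P} {x : P}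
    (hx : x ∈ s) (hxt : x ∉ t) : ¬ s ≤ t :=
  fun h => hxt ((LowerSet.coe_subset_coe.mpr h) hx)

lemma ne_of_mem {P : Type*} [Preorder P] {s t : LowerSet P} {x : P}
    (hx : x ∈ s) (hxt : x ∉ t) : s ≠ t :=
  fun h => hxt (h ▸ hx)

end KhovAux

set_option maxHeartbeats 2000000 in
/-- If for a finite poset `P` that is irreducible with respect to ordinal sum there exists a
compatible monomial order for which `F_{L(P)}` is a Khovanskii basis of `R(L(P))`, then `P`
is `(2+2)`-free and `(1+1+1)`-free. -/

theorem statement0 {P : Type*} [PartialOrder P] [Fintype P]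
    (hirr : OrdinalSumIrreducible P) (k : Type*) [Field k]
    (h : ∃ m : MonomialOrder (LowerSet P), IsCompatible k m ∧
      IsKhovanskiiBasis m (Algebra.adjoin k (hibiSet k (LowerSet P)))
        (hibiSet k (LowerSet P))) :
    TwoTwoFree P ∧ OneOneOneFree P := by
  obtain ⟨m, hc, hkb⟩ := h
  constructor
  · rintro ⟨a, b, c, d, hab, hcd, -, -, -, -, hac, hca, had, hda, hbc, hcb, hbd, hdb⟩
    have hba : ¬ b ≤ a := hab.not_ge
    have hdc : ¬ d ≤ c := hcd.not_ge
    refine KhovAux.case_twotwo hc hkb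
      (A' := LowerSet.Iic a ⊔ (LowerSet.Iic b ⊓ LowerSet.Iic d))
      (C' := LowerSet.Iic c ⊔ (LowerSet.Iic b ⊓ LowerSet.Iic d))
      (B := LowerSet.Iic b) (D := LowerSet.Iic d)
      (Z := LowerSet.Iic b ⊓ LowerSet.Iic d)
      ?_ ?_ ?_ rfl ?_ ?_ ?_ ?_ ?_ ?_ ?_ ?_ ?_ ?_ ?_
    · refine SetLike.ext fun x => ?_
      simp only [LowerSet.mem_sup_iff, LowerSet.mem_inf_iff, LowerSet.mem_Iic_iff]
      have h1 : x ≤ a → x ≤ b := fun h => h.trans hab.le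
      have h2 : x ≤ c → x ≤ d := fun h => h.trans hcd.le
      tauto
    · refine SetLike.ext fun x => ?_
      simp only [LowerSet.mem_sup_iff, LowerSet.mem_inf_iff, LowerSet.mem_Iic_iff]
      have h1 : x ≤ a → x ≤ b := fun h => h.trans hab.le
      tauto
    · refine SetLike.ext fun x => ?_
      simp only [LowerSet.mem_sup_iff, LowerSet.mem_inf_iff, LowerSet.mem_Iic_iff]
      have h2 : x ≤ c → x ≤ d := fun h => h.trans hcd.le
      tauto
    · refine KhovAux.not_le_of_mem (x := a) ?_ ?_ <;>
        simp [LowerSet.mem_sup_iff, LowerSet.mem_inf_iff, LowerSet.mem_Iic_iff, hac, had]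
    · refine KhovAux.not_le_of_mem (x := c) ?_ ?_ <;>
        simp [LowerSet.mem_sup_iff, LowerSet.mem_inf_iff, LowerSet.mem_Iic_iff, hca, hcb]
    · refine KhovAux.not_le_of_mem (x := b) ?_ ?_ <;>
        simp [LowerSet.mem_sup_iff, LowerSet.mem_inf_iff, LowerSet.mem_Iic_iff, hbd]
    · refine KhovAux.not_le_of_mem (x := d) ?_ ?_ <;>
        simp [LowerSet.mem_sup_iff, LowerSet.mem_inf_iff, LowerSet.mem_Iic_iff, hdb]
    · refine KhovAux.not_le_of_mem (x := a) ?_ ?_ <;>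
        simp [LowerSet.mem_sup_iff, LowerSet.mem_inf_iff, LowerSet.mem_Iic_iff, had]
    · refine KhovAux.not_le_of_mem (x := d) ?_ ?_ <;>
        simp [LowerSet.mem_sup_iff, LowerSet.mem_inf_iff, LowerSet.mem_Iic_iff, hda, hdb]
    · refine KhovAux.not_le_of_mem (x := b) ?_ ?_ <;>
        simp [LowerSet.mem_sup_iff, LowerSet.mem_inf_iff, LowerSet.mem_Iic_iff, hbc, hbd]
    · refine KhovAux.not_le_of_mem (x := c) ?_ ?_ <;>
        simp [LowerSet.mem_sup_iff, LowerSet.mem_inf_iff, LowerSet.mem_Iic_iff, hcb]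
    · refine KhovAux.ne_of_mem (x := d) ?_ ?_ <;>
        simp [LowerSet.mem_sup_iff, LowerSet.mem_inf_iff, LowerSet.mem_Iic_iff, hda, hdb, hdc]
    · refine KhovAux.ne_of_mem (x := b) ?_ ?_ <;>
        simp [LowerSet.mem_sup_iff, LowerSet.mem_inf_iff, LowerSet.mem_Iic_iff, hba, hbc, hbd]
    · refine KhovAux.ne_of_mem (x := b) ?_ ?_ <;>
        simp [LowerSet.mem_sup_iff, LowerSet.mem_inf_iff, LowerSet.mem_Iic_iff, hba, hbc, hbd]
  · rintro ⟨a, b, c, -, -, -, nab, nba, nac, nca, nbc, ncb⟩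
    refine KhovAux.case_oneoneone hc hkb
      (A' := LowerSet.Iic a ⊔ (((LowerSet.Iic a ⊓ LowerSet.Iic b) ⊔
        (LowerSet.Iic a ⊓ LowerSet.Iic c)) ⊔ (LowerSet.Iic b ⊓ LowerSet.Iic c)))
      (B' := LowerSet.Iic b ⊔ (((LowerSet.Iic a ⊓ LowerSet.Iic b) ⊔
        (LowerSet.Iic a ⊓ LowerSet.Iic c)) ⊔ (LowerSet.Iic b ⊓ LowerSet.Iic c)))
      (C' := LowerSet.Iic c ⊔ (((LowerSet.Iic a ⊓ LowerSet.Iic b) ⊔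
        (LowerSet.Iic a ⊓ LowerSet.Iic c)) ⊔ (LowerSet.Iic b ⊓ LowerSet.Iic c)))
      (Z := ((LowerSet.Iic a ⊓ LowerSet.Iic b) ⊔ (LowerSet.Iic a ⊓ LowerSet.Iic c)) ⊔
        (LowerSet.Iic b ⊓ LowerSet.Iic c))
      ?_ ?_ ?_ ?_ ?_ ?_ ?_ ?_ ?_ ?_ ?_ ?_ ?_
    · refine SetLike.ext fun x => ?_
      simp only [LowerSet.mem_sup_iff, LowerSet.mem_inf_iff, LowerSet.mem_Iic_iff]
      tauto
    · refine SetLike.ext fun x => ?_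
      simp only [LowerSet.mem_sup_iff, LowerSet.mem_inf_iff, LowerSet.mem_Iic_iff]
      tauto
    · refine SetLike.ext fun x => ?_
      simp only [LowerSet.mem_sup_iff, LowerSet.mem_inf_iff, LowerSet.mem_Iic_iff]
      tauto
    · refine SetLike.ext fun x => ?_
      simp only [LowerSet.mem_sup_iff, LowerSet.mem_inf_iff, LowerSet.mem_Iic_iff]
      tauto
    · refine KhovAux.not_le_of_mem (x := a) ?_ ?_ <;>
        simp [LowerSet.mem_sup_iff, LowerSet.mem_inf_iff, LowerSet.mem_Iic_iff, nab, nac]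
    · refine KhovAux.not_le_of_mem (x := b) ?_ ?_ <;>
        simp [LowerSet.mem_sup_iff, LowerSet.mem_inf_iff, LowerSet.mem_Iic_iff, nba, nbc]
    · refine KhovAux.not_le_of_mem (x := a) ?_ ?_ <;>
        simp [LowerSet.mem_sup_iff, LowerSet.mem_inf_iff, LowerSet.mem_Iic_iff, nab, nac]
    · refine KhovAux.not_le_of_mem (x := b) ?_ ?_ <;>
        simp [LowerSet.mem_sup_iff, LowerSet.mem_inf_iff, LowerSet.mem_Iic_iff, nba, nbc]
    · refine KhovAux.not_le_of_mem (x := a) ?_ ?_ <;>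
        simp [LowerSet.mem_sup_iff, LowerSet.mem_inf_iff, LowerSet.mem_Iic_iff, nab, nac]
    · refine KhovAux.not_le_of_mem (x := b) ?_ ?_ <;>
        simp [LowerSet.mem_sup_iff, LowerSet.mem_inf_iff, LowerSet.mem_Iic_iff, nba, nbc]
    · refine KhovAux.not_le_of_mem (x := b) ?_ ?_ <;>
        simp [LowerSet.mem_sup_iff, LowerSet.mem_inf_iff, LowerSet.mem_Iic_iff, nba, nbc]
    · refine KhovAux.not_le_of_mem (x := a) ?_ ?_ <;>
        simp [LowerSet.mem_sup_iff, LowerSet.mem_inf_iff, LowerSet.mem_Iic_iff, nab, nac]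
    · refine KhovAux.ne_of_mem (x := c) ?_ ?_ <;>
        simp [LowerSet.mem_sup_iff, LowerSet.mem_inf_iff, LowerSet.mem_Iic_iff, nca, ncb]
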